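/- Let G be a group, H a subgroup, σ : H → ℂ a group homomorphism with |σ(h)| = 1 for all h ∈ H, and let x ∈ B = {x ∈ G | σ(h) = σ(x⁻¹hx) for all h ∈ H ∩ xHx⁻¹}. Then there exists a unique function e : G → ℂ such that e(x) = 1, e(y) = 0 for every y ∉ HxH, and e(hyk) = σ(h) e(y) σ(k) for all h, k ∈ H and y ∈ G. Moreover this function satisfies e(hxk) = σ(h)σ(k) for all h, k ∈ H; in particular, if h₁xk₁ = h₂xk₂ with h₁, h₂, k₁, k₂ ∈ H, then σ(h₁)σ(k₁) = σ(h₂)σ(k₂). -/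

import Mathlib

/-- Let `G` be a group, `H` a subgroup, `σ : H → ℂ` a unimodular character,
and `x ∈ B` (Mackey's intertwining condition).  Then there is a unique function `e : G → ℂ`
with `e x = 1`, vanishing off the double coset `H x H`, and satisfying
`e (h y k) = σ h · e y · σ k`.  Moreover any such function satisfies `e (h x k) = σ h · σ k`;
in particular `h₁ x k₁ = h₂ x k₂` forces `σ h₁ σ k₁ = σ h₂ σ k₂`. -/
theorem stmt_10 {G : Type*} [Group G] (H : Subgroup G) (σ : H →* ℂ)
    (hσu : ∀ h : H, ‖σ h‖ = 1)
    (x : G)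
    (hx : ∀ (h : G) (h1 : h ∈ H) (h2 : x⁻¹ * h * x ∈ H),
      σ ⟨h, h1⟩ = σ ⟨x⁻¹ * h * x, h2⟩) :
    (∃! e : G → ℂ, e x = 1 ∧ (∀ y : G, (¬ ∃ h k : H, y = (h : G) * x * (k : G)) → e y = 0) ∧
      (∀ (h k : H) (y : G), e ((h : G) * y * (k : G)) = σ h * e y * σ k)) ∧
    (∀ e : G → ℂ, (e x = 1 ∧ (∀ y : G, (¬ ∃ h k : H, y = (h : G) * x * (k : G)) → e y = 0) ∧
        (∀ (h k : H) (y : G), e ((h : G) * y * (k : G)) = σ h * e y * σ k)) →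
      ∀ h k : H, e ((h : G) * x * (k : G)) = σ h * σ k) ∧
    (∀ h₁ h₂ k₁ k₂ : H, (h₁ : G) * x * (k₁ : G) = (h₂ : G) * x * (k₂ : G) →
      σ h₁ * σ k₁ = σ h₂ * σ k₂) := by
  classical
  have hne : ∀ h : H, σ h ≠ 0 := by
    intro h h0
    have := hσu h
    rw [h0] at this
    simp at this
  -- key well-definedness lemma
  have key : ∀ h₁ h₂ k₁ k₂ : H, (h₁ : G) * x * (k₁ : G) = (h₂ : G) * x * (k₂ : G) →
      σ h₁ * σ k₁ = σ h₂ * σ k₂ := by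
    intro h₁ h₂ k₁ k₂ heq
    have hG : x⁻¹ * ((h₂⁻¹ * h₁ : H) : G) * x = ((k₂ * k₁⁻¹ : H) : G) := by
      push_cast
      have h1 : x⁻¹ * ((h₂ : G)⁻¹) * ((h₁ : G) * x * (k₁ : G)) * ((k₁ : G))⁻¹
          = x⁻¹ * ((h₂ : G)⁻¹ * (h₁ : G)) * x := by group
      rw [← h1, heq]; group
    have hmem2 : x⁻¹ * ((h₂⁻¹ * h₁ : H) : G) * x ∈ H := by
      rw [hG]; exact (k₂ * k₁⁻¹).2
    have := hx ((h₂⁻¹ * h₁ : H) : G) (h₂⁻¹ * h₁).2 hmem2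
    have e1 : (⟨((h₂⁻¹ * h₁ : H) : G), (h₂⁻¹ * h₁).2⟩ : H) = h₂⁻¹ * h₁ := rfl
    have e2 : (⟨x⁻¹ * ((h₂⁻¹ * h₁ : H) : G) * x, hmem2⟩ : H) = k₂ * k₁⁻¹ :=
      Subtype.ext hG
    rw [e1, e2, map_mul, map_mul, map_inv, map_inv] at this
    have h2' := hne h₂
    have k1' := hne k₁
    field_simp at this
    linear_combination this
  -- the function e
  set e : G → ℂ := fun y =>
    if hy : ∃ h k : H, y = (h : G) * x * (k : G)
    then σ hy.choose * σ hy.choose_spec.choose else 0 with he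
  have eval : ∀ h k : H, e ((h : G) * x * (k : G)) = σ h * σ k := by
    intro h k
    have hy : ∃ h' k' : H, ((h : G) * x * (k : G) : G) = (h' : G) * x * (k' : G) :=
      ⟨h, k, rfl⟩
    simp only [he, dif_pos hy]
    exact key _ h _ k hy.choose_spec.choose_spec.symm
  have hx1 : e x = 1 := by
    have hxe : (x : G) = ((1 : H) : G) * x * ((1 : H) : G) := by simp
    rw [hxe, eval]; simp
  have hvan : ∀ y : G, (¬ ∃ h k : H, y = (h : G) * x * (k : G)) → e y = 0 := by
    intro y hy; simp only [he, dif_neg hy]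
  have hmul : ∀ (h k : H) (y : G), e ((h : G) * y * (k : G)) = σ h * e y * σ k := by
    intro h k y
    by_cases hy : ∃ h' k' : H, y = (h' : G) * x * (k' : G)
    · obtain ⟨a, b, rfl⟩ := hy
      have : (h : G) * ((a : G) * x * (b : G)) * (k : G)
          = ((h * a : H) : G) * x * ((b * k : H) : G) := by
        push_cast; group
      rw [this, eval, eval, map_mul, map_mul]; ring
    · have hy2 : ¬ ∃ h' k' : H, (h : G) * y * (k : G) = (h' : G) * x * (k' : G) := by
        rintro ⟨a, b, hab⟩
        refine hy ⟨h⁻¹ * a, b * k⁻¹, ?_⟩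
        push_cast
        have : y = (h : G)⁻¹ * ((h : G) * y * (k : G)) * (k : G)⁻¹ := by group
        rw [this, hab]; group
      rw [hvan y hy, hvan _ hy2]; ring
  refine ⟨⟨e, ⟨hx1, hvan, hmul⟩, ?_⟩, ?_, key⟩
  · rintro e' ⟨h1, h2, h3⟩
    funext y
    by_cases hy : ∃ h k : H, y = (h : G) * x * (k : G)
    · obtain ⟨a, b, rfl⟩ := hy
      rw [h3, h1, eval]; ring
    · rw [h2 y hy, hvan y hy]
  · rintro e' ⟨h1, _, h3⟩ h k
    rw [h3, h1]; ring
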